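/- Let H be a real inner product space, λ₁ > 0, Λ : H → H a continuous linear self-adjoint operator with ⟨Λx, x⟩ ≥ λ₁‖x‖² for all x, η > 0, a₂ ∈ ℝ with η + a₂ > 0, L ≥ 0, and F : H → H satisfying (i) ⟨a − b, F(a) − F(b)⟩ ≥ a₂‖a − b‖² and (ii) |⟨x, F(a) − F(b)⟩| ≤ L·√(⟨Λx, x⟩)·‖a − b‖ for all x, a, b ∈ H. Then there exist ε₀ > 0 and C ≥ 1, depending only on η, a₂, L and λ₁, such that: whenever u, v, ũ, ṽ : ℝ → H are differentiable and satisfy, for all t ≥ 0, u' = v, v' = −Λu − ηv − F(v) + w and ũ' = ṽ, ṽ' = −Λũ − ηṽ − F(ṽ) + w with the same forcing w : ℝ → H, one has for all t ≥ 0: ⟨Λ(u(t) − ũ(t)), u(t) − ũ(t)⟩ + ‖v(t) − ṽ(t)‖² ≤ C·e^{−ε₀ t}·(⟨Λ(u(0) − ũ(0)), u(0) − ũ(0)⟩ + ‖v(0) − ṽ(0)‖²). -/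

import Mathlib

open scoped RealInnerProductSpace

private lemma stmt6_aux (η a₂ L M lam₁ ε a b c X PQ PD QD : ℝ)
    (hη : 0 < η) (hM0 : 0 ≤ M) (hL : 0 ≤ L) (hlam₁ : 0 < lam₁)
    (hε0 : 0 < ε) (hε1 : ε * ((M + L) ^ 2 + 3) ≤ 2 * (η + a₂))
    (hεlam : ε ≤ lam₁ / 2) (hεhalf : ε ≤ 1 / 2)
    (ha0 : 0 ≤ a) (hb0 : 0 ≤ b) (hc0 : 0 ≤ c) (hac : lam₁ * c ^ 2 ≤ a ^ 2)
    (hMc : η * c ≤ M * a) (hPQ : |PQ| ≤ c * b) (hPD : |PD| ≤ L * a * b)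
    (hQD : a₂ * b ^ 2 ≤ QD) :
    2 * X + 2 * (-X - η * b ^ 2 - QD) + 2 * ε * ((-(a ^ 2) - η * PQ - PD) + b ^ 2)
      + 2 * ε / 3 * (a ^ 2 + b ^ 2 + 2 * ε * PQ) ≤ 0 := by
  have habsPQ₁ : -PQ ≤ c * b := by have := abs_le.1 hPQ; linarith [this.1]
  have habsPQ₂ : PQ ≤ c * b := (abs_le.1 hPQ).2
  have habsPD : -PD ≤ L * a * b := by have := abs_le.1 hPD; linarith [this.1]
  have T1 : 2 * ε * η * (-PQ) ≤ 2 * ε * M * (a * b) := by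
    have h1 : 2 * ε * η * (-PQ) ≤ 2 * ε * η * (c * b) := by
      apply mul_le_mul_of_nonneg_left habsPQ₁; positivity
    have h2 : 2 * ε * η * (c * b) ≤ 2 * ε * M * (a * b) := by
      have := mul_le_mul_of_nonneg_right hMc hb0
      nlinarith [hε0.le]
    linarith
  have T2 : 2 * ε * (-PD) ≤ 2 * ε * L * (a * b) := by
    have h1 : 2 * ε * (-PD) ≤ 2 * ε * (L * a * b) := by
      apply mul_le_mul_of_nonneg_left habsPD; positivity
    linarith [h1]
  have T3 : 2 * ε * (M + L) * (a * b) ≤ ε * a ^ 2 + ε * (M + L) ^ 2 * b ^ 2 := by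
    nlinarith [mul_nonneg hε0.le (sq_nonneg (a - (M + L) * b))]
  have T4 : (4 * ε ^ 2 / 3) * PQ ≤ (ε / 3) * a ^ 2 + (ε / 3) * b ^ 2 := by
    have h1 : (4 * ε ^ 2 / 3) * PQ ≤ (4 * ε ^ 2 / 3) * (c * b) := by
      apply mul_le_mul_of_nonneg_left habsPQ₂; positivity
    have h2 : 2 * ε * (c * b) ≤ ε * c ^ 2 + ε * b ^ 2 := by
      nlinarith [mul_nonneg hε0.le (sq_nonneg (c - b))]
    have h3 : ε * c ^ 2 ≤ a ^ 2 / 2 := by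
      have := mul_le_mul_of_nonneg_right hεlam (sq_nonneg c); linarith
    have h4 : ε * b ^ 2 ≤ b ^ 2 / 2 := by
      have := mul_le_mul_of_nonneg_right hεhalf (sq_nonneg b); linarith
    linarith [mul_le_mul_of_nonneg_left h2 (by positivity : (0:ℝ) ≤ 2 * ε / 3),
      mul_le_mul_of_nonneg_left h3 (by positivity : (0:ℝ) ≤ 2 * ε / 3),
      mul_le_mul_of_nonneg_left h4 (by positivity : (0:ℝ) ≤ 2 * ε / 3)]
  have T6 : ε * ((M + L) ^ 2 + 3) * b ^ 2 ≤ 2 * (η + a₂) * b ^ 2 :=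
    mul_le_mul_of_nonneg_right hε1 (sq_nonneg b)
  linarith [T1, T2, T3, T4, T6, hQD]

private lemma stmt6_aux2 (lam₁ ε A B p q PQ : ℝ) (hlam₁ : 0 < lam₁) (hε0 : 0 < ε)
    (hεlam : ε ≤ lam₁ / 2) (hεhalf : ε ≤ 1 / 2) (hA : lam₁ * p ^ 2 ≤ A)
    (hB : B = q ^ 2) (hp : 0 ≤ p) (hq : 0 ≤ q) (hPQ : |PQ| ≤ p * q) :
    (A + B) / 2 ≤ A + B + 2 * ε * PQ ∧ A + B + 2 * ε * PQ ≤ 3 / 2 * (A + B) := by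
  have habs₁ : -PQ ≤ p * q := by have := abs_le.1 hPQ; linarith [this.1]
  have habs₂ : PQ ≤ p * q := (abs_le.1 hPQ).2
  have h2 : 2 * ε * (p * q) ≤ A / 2 + B / 2 := by
    have h3 : ε * p ^ 2 ≤ A / 2 := by
      have := mul_le_mul_of_nonneg_right hεlam (sq_nonneg p); linarith
    have h4 : ε * q ^ 2 ≤ B / 2 := by
      have := mul_le_mul_of_nonneg_right hεhalf (sq_nonneg q); linarith
    nlinarith [mul_nonneg hε0.le (sq_nonneg (p - q))]
  constructor
  · linarith [mul_le_mul_of_nonneg_left habs₁ (by positivity : (0:ℝ) ≤ 2 * ε)]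
  · linarith [mul_le_mul_of_nonneg_left habs₂ (by positivity : (0:ℝ) ≤ 2 * ε)]

set_option maxHeartbeats 1000000 in
theorem stmt6 {H : Type*} [NormedAddCommGroup H] [InnerProductSpace ℝ H]
    (lam₁ : ℝ) (hlam₁ : 0 < lam₁)
    (Λ : H →L[ℝ] H) (hΛsym : ∀ x y : H, ⟪Λ x, y⟫ = ⟪x, Λ y⟫)
    (hΛcoer : ∀ x : H, lam₁ * ‖x‖ ^ 2 ≤ ⟪Λ x, x⟫)
    (η a₂ L : ℝ) (hη : 0 < η) (hηa : 0 < η + a₂) (hL : 0 ≤ L)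
    (F : H → H) (hF₁ : ∀ a b : H, a₂ * ‖a - b‖ ^ 2 ≤ ⟪a - b, F a - F b⟫)
    (hF₂ : ∀ x a b : H, |⟪x, F a - F b⟫| ≤ L * Real.sqrt ⟪Λ x, x⟫ * ‖a - b‖) :
    ∃ ε₀ : ℝ, 0 < ε₀ ∧ ∃ C : ℝ, 1 ≤ C ∧
      ∀ w u₁ v₁ u₂ v₂ : ℝ → H,
        Differentiable ℝ u₁ → Differentiable ℝ v₁ →
        Differentiable ℝ u₂ → Differentiable ℝ v₂ →
        (∀ t : ℝ, 0 ≤ t → deriv u₁ t = v₁ t) →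
        (∀ t : ℝ, 0 ≤ t → deriv v₁ t = -Λ (u₁ t) - η • v₁ t - F (v₁ t) + w t) →
        (∀ t : ℝ, 0 ≤ t → deriv u₂ t = v₂ t) →
        (∀ t : ℝ, 0 ≤ t → deriv v₂ t = -Λ (u₂ t) - η • v₂ t - F (v₂ t) + w t) →
        ∀ t : ℝ, 0 ≤ t →
          ⟪Λ (u₁ t - u₂ t), u₁ t - u₂ t⟫ + ‖v₁ t - v₂ t‖ ^ 2 ≤
            C * Real.exp (-ε₀ * t) *
              (⟪Λ (u₁ 0 - u₂ 0), u₁ 0 - u₂ 0⟫ + ‖v₁ 0 - v₂ 0‖ ^ 2) := by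
  have hsl : 0 < Real.sqrt lam₁ := Real.sqrt_pos.2 hlam₁
  set M : ℝ := η / Real.sqrt lam₁ with hM
  have hM0 : 0 ≤ M := by positivity
  have hMl : M * Real.sqrt lam₁ = η := div_mul_cancel₀ η (ne_of_gt hsl)
  set ε : ℝ := min (2 * (η + a₂) / ((M + L) ^ 2 + 3)) (min (lam₁ / 2) (1 / 2)) with hεdef
  have hε0 : 0 < ε :=
    lt_min (by positivity) (lt_min (by positivity) (by norm_num))
  have hε1 : ε * ((M + L) ^ 2 + 3) ≤ 2 * (η + a₂) := by
    have h := min_le_left (2 * (η + a₂) / ((M + L) ^ 2 + 3)) (min (lam₁ / 2) (1 / 2))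
    rw [← hεdef] at h
    have hpos : (0:ℝ) < (M + L) ^ 2 + 3 := by positivity
    calc ε * ((M + L) ^ 2 + 3) ≤ 2 * (η + a₂) / ((M + L) ^ 2 + 3) * ((M + L) ^ 2 + 3) :=
          mul_le_mul_of_nonneg_right h hpos.le
      _ = 2 * (η + a₂) := div_mul_cancel₀ _ (ne_of_gt hpos)
  have hεlam : ε ≤ lam₁ / 2 := le_trans (min_le_right _ _) (min_le_left _ _)
  have hεhalf : ε ≤ 1 / 2 := le_trans (min_le_right _ _) (min_le_right _ _)
  refine ⟨2 * ε / 3, by positivity, 3, by norm_num, ?_⟩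
  intro w u₁ v₁ u₂ v₂ hu₁ hv₁ hu₂ hv₂ hdu₁ hdv₁ hdu₂ hdv₂ t ht
  set ε₀ : ℝ := 2 * ε / 3 with hε₀def
  set P : ℝ → H := fun s => u₁ s - u₂ s with hPdef
  set Q : ℝ → H := fun s => v₁ s - v₂ s with hQdef
  set D : ℝ → H := fun s => F (v₁ s) - F (v₂ s) with hDdef
  have hPdiff : Differentiable ℝ P := hu₁.sub hu₂
  have hQdiff : Differentiable ℝ Q := hv₁.sub hv₂
  have hP : ∀ s : ℝ, 0 ≤ s → HasDerivAt P (Q s) s := by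
    intro s hs
    have h := ((hu₁ s).hasDerivAt).sub ((hu₂ s).hasDerivAt)
    rw [hdu₁ s hs, hdu₂ s hs] at h
    exact h
  have hQ : ∀ s : ℝ, 0 ≤ s → HasDerivAt Q (-Λ (P s) - η • Q s - D s) s := by
    intro s hs
    have h := ((hv₁ s).hasDerivAt).sub ((hv₂ s).hasDerivAt)
    rw [hdv₁ s hs, hdv₂ s hs] at h
    convert h using 1
    show -Λ (u₁ s - u₂ s) - η • (v₁ s - v₂ s) - (F (v₁ s) - F (v₂ s)) = _
    simp only [map_sub, smul_sub]
    abel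
    rfl
  set V : ℝ → ℝ := fun s => ⟪Λ (P s), P s⟫ + ⟪Q s, Q s⟫ + 2 * ε * ⟪P s, Q s⟫ with hVdef
  have hVdiff : Differentiable ℝ V := by
    refine (Differentiable.add ?_ ?_)
    · exact Differentiable.add
        (Differentiable.inner ℝ (Λ.differentiable.comp hPdiff) hPdiff)
        (Differentiable.inner ℝ hQdiff hQdiff)
    · exact (Differentiable.inner ℝ hPdiff hQdiff).const_mul _
  have hV : ∀ s : ℝ, 0 ≤ s → HasDerivAt V
      ((⟪Λ (P s), Q s⟫ + ⟪Λ (Q s), P s⟫)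
        + (⟪Q s, -Λ (P s) - η • Q s - D s⟫ + ⟪-Λ (P s) - η • Q s - D s, Q s⟫)
        + 2 * ε * (⟪P s, -Λ (P s) - η • Q s - D s⟫ + ⟪Q s, Q s⟫)) s := by
    intro s hs
    have hP' := hP s hs
    have hQ' := hQ s hs
    have hΛP : HasDerivAt (fun r => Λ (P r)) (Λ (Q s)) s :=
      (Λ.hasFDerivAt.comp_hasDerivAt s hP')
    exact ((hΛP.inner ℝ hP').add (hQ'.inner ℝ hQ')).add
      ((hP'.inner ℝ hQ').const_mul (2 * ε))
  -- pointwise quantities and bounds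
  have key : ∀ s : ℝ, 0 ≤ s → deriv V s + ε₀ * V s ≤ 0 := by
    intro s hs
    set a : ℝ := Real.sqrt ⟪Λ (P s), P s⟫ with ha
    set b : ℝ := ‖Q s‖ with hb
    set c : ℝ := ‖P s‖ with hc
    have hA0 : (0:ℝ) ≤ ⟪Λ (P s), P s⟫ := le_trans (by positivity) (hΛcoer (P s))
    have ha2 : a ^ 2 = ⟪Λ (P s), P s⟫ := Real.sq_sqrt hA0
    have ha0 : 0 ≤ a := Real.sqrt_nonneg _
    have hb0 : 0 ≤ b := norm_nonneg _
    have hc0 : 0 ≤ c := norm_nonneg _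
    have hac : lam₁ * c ^ 2 ≤ a ^ 2 := by rw [ha2]; exact hΛcoer (P s)
    have hslc : Real.sqrt lam₁ * c ≤ a := by
      have h1 : Real.sqrt (lam₁ * c ^ 2) ≤ Real.sqrt (a ^ 2) := Real.sqrt_le_sqrt hac
      rwa [Real.sqrt_mul hlam₁.le, Real.sqrt_sq hc0, Real.sqrt_sq ha0] at h1
    have hMc : η * c ≤ M * a := by
      calc η * c = M * (Real.sqrt lam₁ * c) := by rw [← hMl]; ring
        _ ≤ M * a := mul_le_mul_of_nonneg_left hslc hM0
    have hPQ : |⟪P s, Q s⟫| ≤ c * b := abs_real_inner_le_norm _ _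
    have hPD : |⟪P s, D s⟫| ≤ L * a * b := by
      have := hF₂ (P s) (v₁ s) (v₂ s)
      simpa [hDdef, hQdef, ← ha, ← hb] using this
    have hQD : a₂ * b ^ 2 ≤ ⟪Q s, D s⟫ := by
      have := hF₁ (v₁ s) (v₂ s)
      simpa [hDdef, hQdef, ← hb] using this
    have hBB : ⟪Q s, Q s⟫ = b ^ 2 := real_inner_self_eq_norm_sq _
    have hderiv : deriv V s =
        2 * ⟪Λ (P s), Q s⟫
        + 2 * (-⟪Λ (P s), Q s⟫ - η * b ^ 2 - ⟪Q s, D s⟫)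
        + 2 * ε * ((-(a ^ 2) - η * ⟪P s, Q s⟫ - ⟪P s, D s⟫) + b ^ 2) := by
      rw [(hV s hs).deriv]
      have e1 : ⟪Λ (Q s), P s⟫ = ⟪Λ (P s), Q s⟫ := by
        rw [hΛsym, real_inner_comm]
      have e2 : ⟪Q s, -Λ (P s) - η • Q s - D s⟫ =
          -⟪Λ (P s), Q s⟫ - η * b ^ 2 - ⟪Q s, D s⟫ := by
        rw [inner_sub_right, inner_sub_right, inner_neg_right, real_inner_smul_right,
          real_inner_comm (Q s) (Λ (P s)), hBB]
      have e3 : ⟪-Λ (P s) - η • Q s - D s, Q s⟫ =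
          -⟪Λ (P s), Q s⟫ - η * b ^ 2 - ⟪Q s, D s⟫ := by
        rw [real_inner_comm]; exact e2
      have e4 : ⟪P s, -Λ (P s) - η • Q s - D s⟫ =
          -(a ^ 2) - η * ⟪P s, Q s⟫ - ⟪P s, D s⟫ := by
        rw [inner_sub_right, inner_sub_right, inner_neg_right, real_inner_smul_right,
          real_inner_comm (Λ (P s)) (P s), ← ha2]
      rw [e1, e2, e3, e4, hBB]; ring
    have hVval : V s = a ^ 2 + b ^ 2 + 2 * ε * ⟪P s, Q s⟫ := by
      rw [hVdef]; dsimp only; rw [← ha2, hBB]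
    rw [hderiv, hVval, hε₀def]
    exact stmt6_aux η a₂ L M lam₁ ε a b c (⟪Λ (P s), Q s⟫) (⟪P s, Q s⟫)
      (⟪P s, D s⟫) (⟪Q s, D s⟫) hη hM0 hL hlam₁ hε0 hε1 hεlam hεhalf ha0 hb0 hc0 hac hMc
      hPQ hPD hQD
  -- Gronwall via antitone of g
  set g : ℝ → ℝ := fun s => V s * Real.exp (ε₀ * s) with hgdef
  have hgd : ∀ s : ℝ, 0 ≤ s →
      HasDerivAt g ((deriv V s + ε₀ * V s) * Real.exp (ε₀ * s)) s := by
    intro s hs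
    have h1 : HasDerivAt (fun r : ℝ => Real.exp (ε₀ * r)) (Real.exp (ε₀ * s) * ε₀) s := by
      have := ((hasDerivAt_id s).const_mul ε₀).exp
      simpa using this
    have h2 := ((hVdiff s).hasDerivAt).mul h1
    exact h2.congr_deriv (by ring)
  have hganti : AntitoneOn g (Set.Ici (0:ℝ)) := by
    apply antitoneOn_of_deriv_nonpos (convex_Ici 0)
    · exact (hVdiff.mul (Real.differentiable_exp.comp (differentiable_id.const_mul ε₀))).continuous.continuousOn
    · intro x hx
      rw [interior_Ici] at hx
      exact ((hgd x (le_of_lt hx)).differentiableAt).differentiableWithinAt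
    · intro x hx
      rw [interior_Ici] at hx
      rw [(hgd x (le_of_lt hx)).deriv]
      have hk := key x (le_of_lt hx)
      have hexp : 0 < Real.exp (ε₀ * x) := Real.exp_pos _
      exact mul_nonpos_iff.2 (Or.inr ⟨hk, hexp.le⟩)
  have hgt : g t ≤ g 0 := hganti (Set.self_mem_Ici) (Set.mem_Ici.2 ht) ht
  -- comparison of V with energy
  have hcomp : ∀ s : ℝ,
      (⟪Λ (P s), P s⟫ + ‖Q s‖ ^ 2) / 2 ≤ V s ∧
      V s ≤ (3 / 2) * (⟪Λ (P s), P s⟫ + ‖Q s‖ ^ 2) := by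
    intro s
    have hA0 : (0:ℝ) ≤ ⟪Λ (P s), P s⟫ := le_trans (by positivity) (hΛcoer (P s))
    have hBB : ⟪Q s, Q s⟫ = ‖Q s‖ ^ 2 := real_inner_self_eq_norm_sq _
    have hPQ : |⟪P s, Q s⟫| ≤ ‖P s‖ * ‖Q s‖ := abs_real_inner_le_norm _ _
    have hcoP := hΛcoer (P s)
    have haux := stmt6_aux2 lam₁ ε (⟪Λ (P s), P s⟫) (‖Q s‖ ^ 2) (‖P s‖) (‖Q s‖)
      (⟪P s, Q s⟫) hlam₁ hε0 hεlam hεhalf (hΛcoer (P s)) rfl (norm_nonneg _) (norm_nonneg _) hPQ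
    constructor
    · rw [hVdef]; dsimp only; rw [hBB]; exact haux.1
    · rw [hVdef]; dsimp only; rw [hBB]; exact haux.2
  have hVt := (hcomp t).1
  have hV0 := (hcomp 0).2
  have hexp0 : Real.exp (ε₀ * 0) = 1 := by norm_num
  have hVle : V t ≤ Real.exp (-ε₀ * t) * V 0 := by
    have hexpos : 0 < Real.exp (ε₀ * t) := Real.exp_pos _
    have : V t * Real.exp (ε₀ * t) ≤ V 0 := by
      have := hgt; rw [hgdef] at this; simpa [hexp0] using this
    have h2 := mul_le_mul_of_nonneg_right this (le_of_lt (Real.exp_pos (-ε₀ * t)))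
    calc V t = V t * Real.exp (ε₀ * t) * Real.exp (-ε₀ * t) := by
          rw [mul_assoc, ← Real.exp_add]; simp
      _ ≤ V 0 * Real.exp (-ε₀ * t) := h2
      _ = Real.exp (-ε₀ * t) * V 0 := by ring
  have hexpnn : 0 ≤ Real.exp (-ε₀ * t) := (Real.exp_pos _).le
  clear_value V
  have hfinal : ⟪Λ (P t), P t⟫ + ‖Q t‖ ^ 2 ≤
      3 * Real.exp (-ε₀ * t) * (⟪Λ (P 0), P 0⟫ + ‖Q 0‖ ^ 2) := by
    have h1 : ⟪Λ (P t), P t⟫ + ‖Q t‖ ^ 2 ≤ 2 * V t := by linarith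
    have h2 : 2 * V t ≤ 2 * (Real.exp (-ε₀ * t) * V 0) := by linarith
    have h3 : V 0 ≤ (3/2) * (⟪Λ (P 0), P 0⟫ + ‖Q 0‖ ^ 2) := hV0
    have h4 : Real.exp (-ε₀ * t) * V 0 ≤
        Real.exp (-ε₀ * t) * ((3/2) * (⟪Λ (P 0), P 0⟫ + ‖Q 0‖ ^ 2)) :=
      mul_le_mul_of_nonneg_left h3 hexpnn
    calc ⟪Λ (P t), P t⟫ + ‖Q t‖ ^ 2 ≤ 2 * V t := h1
      _ ≤ 2 * (Real.exp (-ε₀ * t) * V 0) := h2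
      _ ≤ 2 * (Real.exp (-ε₀ * t) * ((3/2) * (⟪Λ (P 0), P 0⟫ + ‖Q 0‖ ^ 2))) := by linarith
      _ = 3 * Real.exp (-ε₀ * t) * (⟪Λ (P 0), P 0⟫ + ‖Q 0‖ ^ 2) := by ring
  simpa [hPdef, hQdef] using hfinal
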